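/- arXiv:2010.15088 — 2 statements merged into one kernel-verified Lean document; each statement's English description precedes it below -/
import Mathlib

section
/- Let N, d ≥ 1, B > 0, ε ≥ 0, let W ∈ ℝ^{N×N} be doubly stochastic with ‖W − (1/N)𝟙𝟙ᵀ‖_* ≤ 1, let Θ ∈ ℝ^{N×d} have rows θ_1,…,θ_N with row average θ̄, and let G ∈ ℝ^{N×d} have rows g_1,…,g_N satisfying ‖g_i‖ ≤ B(‖θ_i‖ + 1) for every i. Set Θ' = WΘ + εG with row average θ̄'. Then ‖Θ' − 𝟙(θ̄')ᵀ‖_F ≤ (1 + εNB)‖Θ − 𝟙θ̄ᵀ‖_F + εNB‖θ̄‖ + εNB. -/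
/-- Euclidean norm of a vector in `ℝ^d` given as a plain function. -/
noncomputable def euclNorm {d : ℕ} (v : Fin d → ℝ) : ℝ :=
  ‖(WithLp.equiv 2 (Fin d → ℝ)).symm v‖

/-- Frobenius norm of a matrix. -/
noncomputable def frobNorm {N d : ℕ} (M : Matrix (Fin N) (Fin d) ℝ) : ℝ :=
  Real.sqrt (∑ i, ∑ j, (M i j) ^ 2)

/-- Spectral (ℓ₂ operator) norm of a square matrix. -/
noncomputable def specNorm {N : ℕ} (M : Matrix (Fin N) (Fin N) ℝ) : ℝ :=
  ‖Matrix.toEuclideanCLM (𝕜 := ℝ) M‖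

/-- A matrix is doubly stochastic: nonnegative entries, all row sums and column sums equal 1. -/
def DoublyStochastic {N : ℕ} (W : Matrix (Fin N) (Fin N) ℝ) : Prop :=
  (∀ i j, 0 ≤ W i j) ∧ (∀ i, ∑ j, W i j = 1) ∧ (∀ j, ∑ i, W i j = 1)

/-- Row average of a matrix `Θ ∈ ℝ^{N×d}`: `θ̄ = (1/N) Θᵀ 𝟙`. -/
noncomputable def rowAvg {N d : ℕ} (Θ : Matrix (Fin N) (Fin d) ℝ) : Fin d → ℝ :=
  fun j => (N : ℝ)⁻¹ * ∑ i, Θ i j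

section helpers
variable {N d : ℕ}

lemma euclNorm_eq (v : Fin d → ℝ) : euclNorm v = Real.sqrt (∑ j, (v j) ^ 2) := by
  rw [euclNorm, EuclideanSpace.norm_eq]
  simp [WithLp.equiv_symm_apply, Real.norm_eq_abs, sq_abs]

lemma sqrt_sum_add_sq_le (a b : Fin N → ℝ) :
    Real.sqrt (∑ i, (a i + b i) ^ 2) ≤
      Real.sqrt (∑ i, (a i) ^ 2) + Real.sqrt (∑ i, (b i) ^ 2) := by
  have h := norm_add_le ((WithLp.equiv 2 (Fin N → ℝ)).symm a)
    ((WithLp.equiv 2 (Fin N → ℝ)).symm b)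
  rw [WithLp.equiv_symm_apply, ← WithLp.toLp_add] at h
  simpa [EuclideanSpace.norm_eq, WithLp.equiv_symm_apply, Real.norm_eq_abs,
    sq_abs] using h

lemma frobNorm_nonneg (M : Matrix (Fin N) (Fin d) ℝ) : 0 ≤ frobNorm M :=
  Real.sqrt_nonneg _

lemma frob_eq_norm (M : Matrix (Fin N) (Fin d) ℝ) :
    frobNorm M = ‖(WithLp.equiv 2 ((Fin N × Fin d) → ℝ)).symm (fun p => M p.1 p.2)‖ := by
  rw [frobNorm, EuclideanSpace.norm_eq]
  simp [WithLp.equiv_symm_apply, Real.norm_eq_abs, sq_abs, Fintype.sum_prod_type]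

lemma frobNorm_add_le (X Y : Matrix (Fin N) (Fin d) ℝ) :
    frobNorm (X + Y) ≤ frobNorm X + frobNorm Y := by
  rw [frob_eq_norm, frob_eq_norm, frob_eq_norm]
  have : (fun p : Fin N × Fin d => (X + Y) p.1 p.2)
      = (fun p : Fin N × Fin d => X p.1 p.2) + (fun p => Y p.1 p.2) := rfl
  rw [this, WithLp.equiv_symm_apply, WithLp.toLp_add]
  exact norm_add_le _ _

lemma frobNorm_smul (ε : ℝ) (hε : 0 ≤ ε) (M : Matrix (Fin N) (Fin d) ℝ) :
    frobNorm (ε • M) = ε * frobNorm M := by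
  simp only [frobNorm, Matrix.smul_apply, smul_eq_mul, mul_pow, ← Finset.mul_sum]
  rw [Real.sqrt_mul (sq_nonneg ε), Real.sqrt_sq hε]

lemma mulVec_norm_le (A : Matrix (Fin N) (Fin N) ℝ) (v : Fin N → ℝ) :
    euclNorm (A.mulVec v) ≤ specNorm A * euclNorm v := by
  have h := (Matrix.toEuclideanCLM (𝕜 := ℝ) A).le_opNorm
    ((WithLp.equiv 2 (Fin N → ℝ)).symm v)
  rwa [WithLp.equiv_symm_apply, Matrix.toEuclideanCLM_toLp] at h

lemma frobNorm_mul_le (A : Matrix (Fin N) (Fin N) ℝ) (D : Matrix (Fin N) (Fin d) ℝ) :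
    frobNorm (A * D) ≤ specNorm A * frobNorm D := by
  have hA : 0 ≤ specNorm A := norm_nonneg _
  have hcol : ∀ j, ∑ i, ((A * D) i j) ^ 2 ≤ specNorm A ^ 2 * ∑ i, (D i j) ^ 2 := by
    intro j
    have h := mulVec_norm_le A (fun i => D i j)
    rw [euclNorm_eq, euclNorm_eq] at h
    have h2 : ∑ i, (A.mulVec (fun i => D i j) i) ^ 2 ≤
        (specNorm A * Real.sqrt (∑ i, (D i j) ^ 2)) ^ 2 := by
      nlinarith [Real.sq_sqrt (show (0:ℝ) ≤ ∑ i, (A.mulVec (fun i => D i j) i) ^ 2 by positivity),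
        Real.sqrt_nonneg (∑ i, (A.mulVec (fun i => D i j) i) ^ 2), h]
    have h3 : ∀ i, (A * D) i j = A.mulVec (fun k => D k j) i := by
      intro i; simp [Matrix.mul_apply, Matrix.mulVec, dotProduct]
    calc ∑ i, ((A * D) i j) ^ 2 = ∑ i, (A.mulVec (fun k => D k j) i) ^ 2 := by
          simp_rw [h3]
      _ ≤ (specNorm A * Real.sqrt (∑ i, (D i j) ^ 2)) ^ 2 := h2
      _ = specNorm A ^ 2 * ∑ i, (D i j) ^ 2 := by
          rw [mul_pow, Real.sq_sqrt (by positivity)]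
  rw [frobNorm, frobNorm, Finset.sum_comm]
  calc Real.sqrt (∑ j, ∑ i, ((A*D) i j)^2)
      ≤ Real.sqrt (∑ j, specNorm A ^ 2 * ∑ i, (D i j) ^ 2) :=
        Real.sqrt_le_sqrt (Finset.sum_le_sum fun j _ => hcol j)
    _ = specNorm A * Real.sqrt (∑ i, ∑ j, (D i j) ^ 2) := by
        rw [← Finset.mul_sum, Real.sqrt_mul (sq_nonneg _), Real.sqrt_sq hA,
          Finset.sum_comm]

lemma col_center_le (hN : 1 ≤ N) (g : Fin N → ℝ) :
    ∑ i, (g i - (N : ℝ)⁻¹ * ∑ k, g k) ^ 2 ≤ ∑ i, (g i) ^ 2 := by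
  have hN0 : (N : ℝ) ≠ 0 := by positivity
  set m : ℝ := (N : ℝ)⁻¹ * ∑ k, g k with hm
  have hsum : ∑ k, g k = N * m := by rw [hm]; field_simp
  have hexp : ∑ i, (g i - m) ^ 2 = ∑ i, (g i) ^ 2 - (N : ℝ) * m ^ 2 := by
    have : ∑ i, (g i - m) ^ 2 = ∑ i, ((g i) ^ 2 - 2 * m * g i + m ^ 2) := by
      apply Finset.sum_congr rfl; intro i _; ring
    rw [this, Finset.sum_add_distrib, Finset.sum_sub_distrib, ← Finset.mul_sum,
      Finset.sum_const, Finset.card_univ, Fintype.card_fin, hsum, nsmul_eq_mul]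
    ring
  rw [hexp]
  nlinarith [sq_nonneg m, (show (1:ℝ) ≤ N by exact_mod_cast hN)]

lemma frobNorm_center_le (hN : 1 ≤ N) (G : Matrix (Fin N) (Fin d) ℝ) :
    frobNorm (G - Matrix.of (fun _ j => rowAvg G j)) ≤ frobNorm G := by
  rw [frobNorm, frobNorm, Finset.sum_comm, Finset.sum_comm (f := fun i j => (G i j)^2)]
  apply Real.sqrt_le_sqrt
  apply Finset.sum_le_sum
  intro j _
  have := col_center_le hN (fun i => G i j)
  simpa [Matrix.sub_apply, rowAvg] using this

end helpers

/-- One-step bound on the Frobenius norm of the consensus error: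
`‖Θ' − 𝟙(θ̄')ᵀ‖_F ≤ (1 + εNB)‖Θ − 𝟙θ̄ᵀ‖_F + εNB‖θ̄‖ + εNB`. -/
theorem consensus_error_frobenius_step (N d : ℕ) (hN : 1 ≤ N) (hd : 1 ≤ d)
    (B ε : ℝ) (hB : 0 < B) (hε : 0 ≤ ε)
    (W : Matrix (Fin N) (Fin N) ℝ) (hW : DoublyStochastic W)
    (hWspec : specNorm (W - (N : ℝ)⁻¹ •
      Matrix.of (fun (_ : Fin N) (_ : Fin N) => (1 : ℝ))) ≤ 1)
    (Θ G : Matrix (Fin N) (Fin d) ℝ)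
    (hG : ∀ i, euclNorm (fun j => G i j) ≤ B * (euclNorm (fun j => Θ i j) + 1))
    (Θ' : Matrix (Fin N) (Fin d) ℝ) (hΘ' : Θ' = W * Θ + ε • G) :
    frobNorm (Θ' - Matrix.of (fun _ j => rowAvg Θ' j))
      ≤ (1 + ε * N * B) * frobNorm (Θ - Matrix.of (fun _ j => rowAvg Θ j))
        + ε * N * B * euclNorm (rowAvg Θ) + ε * N * B := by
  have hN0 : (N : ℝ) ≠ 0 := by positivity
  have hN1 : (1:ℝ) ≤ (N:ℝ) := by exact_mod_cast hN
  set J : Matrix (Fin N) (Fin N) ℝ :=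
    (N : ℝ)⁻¹ • Matrix.of (fun (_ : Fin N) (_ : Fin N) => (1 : ℝ)) with hJ
  have hJmul : ∀ (X : Matrix (Fin N) (Fin d) ℝ),
      (Matrix.of (fun (_ : Fin N) j => rowAvg X j)) = J * X := by
    intro X; ext i j
    simp [hJ, Matrix.mul_apply, rowAvg, Finset.mul_sum]
  have hJW : J * W = J := by
    ext i j
    simp [hJ, Matrix.mul_apply, ← Finset.mul_sum, hW.2.2 j]
  have hWJ : W * J = J := by
    ext i j
    simp [hJ, Matrix.mul_apply, ← Finset.sum_mul, hW.2.1 i]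
  have hJJ : J * J = J := by
    ext i j
    simp [hJ, Matrix.mul_apply, Finset.sum_const, Finset.card_univ]
    field_simp
  -- key algebraic identity
  have key : Θ' - J * Θ' = (W - J) * (Θ - J * Θ) + ε • (G - J * G) := by
    subst hΘ'
    have h2 : (W - J) * (Θ - J * Θ) = W * Θ - J * Θ := by
      rw [Matrix.sub_mul, Matrix.mul_sub, Matrix.mul_sub, ← Matrix.mul_assoc,
        ← Matrix.mul_assoc, hWJ, hJJ]
      abel
    have h1 : J * (W * Θ) = J * Θ := by rw [← Matrix.mul_assoc, hJW]
    rw [Matrix.mul_add, h1, h2, Matrix.mul_smul, smul_sub]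
    abel
  rw [hJmul Θ', hJmul Θ]
  set D : Matrix (Fin N) (Fin d) ℝ := Θ - J * Θ with hD
  -- Frobenius norm of the constant-row matrix of rowAvg Θ
  have havg : frobNorm (J * Θ) = Real.sqrt N * euclNorm (rowAvg Θ) := by
    rw [← hJmul Θ, frobNorm, euclNorm_eq]
    simp only [Matrix.of_apply]
    rw [Finset.sum_const, Finset.card_univ, Fintype.card_fin, nsmul_eq_mul,
      Real.sqrt_mul (by positivity)]
  have hΘsplit : frobNorm Θ ≤ frobNorm D + Real.sqrt N * euclNorm (rowAvg Θ) := by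
    have : Θ = D + J * Θ := by rw [hD]; abel
    calc frobNorm Θ = frobNorm (D + J * Θ) := by rw [← this]
      _ ≤ frobNorm D + frobNorm (J * Θ) := frobNorm_add_le _ _
      _ = frobNorm D + Real.sqrt N * euclNorm (rowAvg Θ) := by rw [havg]
  -- bound on frobNorm G
  have hGfrob : frobNorm G ≤ B * (frobNorm Θ + Real.sqrt N) := by
    have hrow : ∀ (M : Matrix (Fin N) (Fin d) ℝ),
        frobNorm M = Real.sqrt (∑ i, (euclNorm (fun j => M i j)) ^ 2) := by
      intro M
      rw [frobNorm]
      congr 1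
      apply Finset.sum_congr rfl
      intro i _
      rw [euclNorm_eq, Real.sq_sqrt (by positivity)]
    rw [hrow G]
    calc Real.sqrt (∑ i, (euclNorm (fun j => G i j)) ^ 2)
        ≤ Real.sqrt (∑ i, (B * (euclNorm (fun j => Θ i j) + 1)) ^ 2) := by
          apply Real.sqrt_le_sqrt
          apply Finset.sum_le_sum
          intro i _
          have h1 := hG i
          have h2 := euclNorm_eq (fun j => G i j) ▸ Real.sqrt_nonneg _
          nlinarith [euclNorm_eq (fun j => G i j) ▸ (Real.sqrt_nonneg (∑ j, (G i j)^2))]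
      _ = B * Real.sqrt (∑ i, (euclNorm (fun j => Θ i j) + 1) ^ 2) := by
          simp only [mul_pow, ← Finset.mul_sum]
          rw [Real.sqrt_mul (sq_nonneg B), Real.sqrt_sq hB.le]
      _ ≤ B * (Real.sqrt (∑ i, (euclNorm (fun j => Θ i j)) ^ 2) +
            Real.sqrt (∑ (_ : Fin N), (1:ℝ) ^ 2)) := by
          apply mul_le_mul_of_nonneg_left _ hB.le
          exact sqrt_sum_add_sq_le _ _
      _ = B * (frobNorm Θ + Real.sqrt N) := by
          rw [← hrow Θ]
          congr 2
          simp
  -- main chain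
  have hζ : frobNorm (G - J * G) ≤ frobNorm G := by
    rw [← hJmul G]; exact frobNorm_center_le hN G
  have hmain : frobNorm (Θ' - J * Θ') ≤ frobNorm D + ε * frobNorm G := by
    rw [key]
    calc frobNorm ((W - J) * D + ε • (G - J * G))
        ≤ frobNorm ((W - J) * D) + frobNorm (ε • (G - J * G)) := frobNorm_add_le _ _
      _ ≤ specNorm (W - J) * frobNorm D + ε * frobNorm (G - J * G) := by
          rw [frobNorm_smul ε hε]
          gcongr
          · exact frobNorm_mul_le _ _
      _ ≤ 1 * frobNorm D + ε * frobNorm G := by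
          gcongr
          exact frobNorm_nonneg _
      _ = frobNorm D + ε * frobNorm G := by ring
  have hs : Real.sqrt (N:ℝ) ≤ (N:ℝ) := by
    nlinarith [Real.sq_sqrt (show (0:ℝ) ≤ (N:ℝ) by positivity),
      Real.sqrt_nonneg (N:ℝ), sq_nonneg (Real.sqrt (N:ℝ) - 1)]
  have hsnn : (0:ℝ) ≤ Real.sqrt N := Real.sqrt_nonneg _
  have hFnn := frobNorm_nonneg D
  have hMnn : 0 ≤ euclNorm (rowAvg Θ) := norm_nonneg _
  have hGbd : frobNorm G ≤ B * (frobNorm D + Real.sqrt N * euclNorm (rowAvg Θ) + Real.sqrt N) := by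
    calc frobNorm G ≤ B * (frobNorm Θ + Real.sqrt N) := hGfrob
      _ ≤ B * (frobNorm D + Real.sqrt N * euclNorm (rowAvg Θ) + Real.sqrt N) := by
          apply mul_le_mul_of_nonneg_left _ hB.le
          linarith
  have hfinal := hmain.trans (by
    have : ε * frobNorm G ≤ ε * (B * (frobNorm D + Real.sqrt N * euclNorm (rowAvg Θ) + Real.sqrt N)) :=
      mul_le_mul_of_nonneg_left hGbd hε
    linarith : frobNorm D + ε * frobNorm G ≤
      frobNorm D + ε * (B * (frobNorm D + Real.sqrt N * euclNorm (rowAvg Θ) + Real.sqrt N)))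
  refine hfinal.trans ?_
  nlinarith [mul_nonneg hε hB.le, mul_nonneg (mul_nonneg hε hB.le) hFnn,
    mul_nonneg (mul_nonneg hε hB.le) hMnn,
    mul_le_mul_of_nonneg_left hs (mul_nonneg hε hB.le)]
end

section
/- Let α > 0, ε > 0 with αε ≥ 8, let c ≥ 0, let τ ≥ 1 and ℓ, k be natural numbers with ℓ + τ ≤ k, and define the step sizes ε_t = ε/(t+1) for t ∈ ℕ. Assume ∑_{t=ℓ}^{ℓ+τ−1} c ε_t ≤ log 2 and α ε_t ≤ 8 for every t ≥ ℓ + τ. Then ( ∏_{t=ℓ}^{ℓ+τ−1} (1 + c ε_t) ) · ( ∏_{t=ℓ+τ}^{k−1} (1 − α ε_t / 8) ) ≤ 2(ℓ + τ + 1)/(k + 1). -/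
lemma telescope_prod (m : ℕ) (hm : 1 ≤ m) (k : ℕ) (hk : m ≤ k) :
    ∏ t ∈ Finset.Ico m k, ((t : ℝ) / (t + 1)) = (m : ℝ) / k := by
  induction k, hk using Nat.le_induction with
  | base =>
    rw [Finset.Ico_self, Finset.prod_empty, div_self]
    have : (0:ℕ) < m := hm
    positivity
  | succ n hn ih =>
    have hn1 : 1 ≤ n := le_trans hm hn
    have h0 : (0:ℝ) < n := by exact_mod_cast hn1
    rw [Finset.prod_Ico_succ_top hn, ih]
    push_cast
    field_simp

/-- Product estimate for the diminishing step sizes `ε_t = ε/(t+1)`: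
`(∏_{t=ℓ}^{ℓ+τ−1} (1 + c ε_t)) (∏_{t=ℓ+τ}^{k−1} (1 − α ε_t/8)) ≤ 2(ℓ+τ+1)/(k+1)`. -/
theorem step_size_product_estimate (α ε c : ℝ) (hα : 0 < α) (hε : 0 < ε)
    (hαε : 8 ≤ α * ε) (hc : 0 ≤ c)
    (τ ℓ k : ℕ) (hτ : 1 ≤ τ) (hℓk : ℓ + τ ≤ k)
    (hsum : ∑ t ∈ Finset.Ico ℓ (ℓ + τ), c * (ε / (t + 1)) ≤ Real.log 2)
    (hsmall : ∀ t : ℕ, ℓ + τ ≤ t → α * (ε / (t + 1)) ≤ 8) :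
    (∏ t ∈ Finset.Ico ℓ (ℓ + τ), (1 + c * (ε / (t + 1))))
        * (∏ t ∈ Finset.Ico (ℓ + τ) k, (1 - α * (ε / (t + 1)) / 8))
      ≤ 2 * ((ℓ : ℝ) + τ + 1) / ((k : ℝ) + 1) := by
  set m := ℓ + τ with hm
  have hm1 : 1 ≤ m := le_trans hτ (Nat.le_add_left τ ℓ)
  have hk1 : 1 ≤ k := le_trans hm1 hℓk
  have hk0 : (0:ℝ) < k := by exact_mod_cast hk1
  -- first product ≤ 2
  have hA : (∏ t ∈ Finset.Ico ℓ m, (1 + c * (ε / (t + 1)))) ≤ 2 := by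
    calc (∏ t ∈ Finset.Ico ℓ m, (1 + c * (ε / (t + 1))))
        ≤ ∏ t ∈ Finset.Ico ℓ m, Real.exp (c * (ε / (t + 1))) := by
          apply Finset.prod_le_prod
          · intro i _; positivity
          · intro i _
            have := Real.add_one_le_exp (c * (ε / (i + 1)))
            linarith
      _ = Real.exp (∑ t ∈ Finset.Ico ℓ m, c * (ε / (t + 1))) := (Real.exp_sum _ _).symm
      _ ≤ Real.exp (Real.log 2) := Real.exp_le_exp.mpr hsum
      _ = 2 := Real.exp_log (by norm_num)
  -- second product ≤ m / k
  have hB : (∏ t ∈ Finset.Ico m k, (1 - α * (ε / (t + 1)) / 8)) ≤ (m : ℝ) / k := by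
    rw [← telescope_prod m hm1 k hℓk]
    apply Finset.prod_le_prod
    · intro i hi
      have := hsmall i (Finset.mem_Ico.mp hi).1
      linarith
    · intro i hi
      have hi0 : (0:ℝ) < (i:ℝ) + 1 := by positivity
      have h1 : 1 / ((i:ℝ) + 1) ≤ α * (ε / (i + 1)) / 8 := by
        rw [div_le_div_iff₀ hi0 (by norm_num : (0:ℝ) < 8)]
        have : α * (ε / (i + 1)) * (i + 1) = α * ε := by field_simp
        rw [this]; linarith
      have h2 : (i:ℝ) / (i + 1) = 1 - 1 / ((i:ℝ) + 1) := by field_simp; ring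
      rw [h2]; linarith
  have hBnn : 0 ≤ (∏ t ∈ Finset.Ico m k, (1 - α * (ε / (t + 1)) / 8)) := by
    apply Finset.prod_nonneg
    intro i hi
    have := hsmall i (Finset.mem_Ico.mp hi).1
    linarith
  have hAnn : (0:ℝ) ≤ 2 := by norm_num
  calc (∏ t ∈ Finset.Ico ℓ m, (1 + c * (ε / (t + 1))))
        * (∏ t ∈ Finset.Ico m k, (1 - α * (ε / (t + 1)) / 8))
      ≤ 2 * ((m : ℝ) / k) := mul_le_mul hA hB hBnn hAnn
    _ ≤ 2 * ((ℓ : ℝ) + τ + 1) / ((k : ℝ) + 1) := by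
        have hmk : (m : ℝ) ≤ k := by exact_mod_cast hℓk
        have hmcast : (m : ℝ) = (ℓ : ℝ) + τ := by push_cast [hm]; ring
        rw [mul_div_assoc, ← mul_div_assoc, ← mul_div_assoc, div_le_div_iff₀ hk0 (by linarith : (0:ℝ) < (k:ℝ) + 1), hmcast]
        nlinarith [hmcast, hmk]
end
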